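/- Converse-result theorem (deterministic part): Let ω:[0,∞)→[0,∞) be nondecreasing with ω(0)=0 and ω(M)=R² for some R, M > 0, let σ∈(0,1), C_σ>0, and let φ be a nondecreasing positive function on (0,M] with φ(λ)/φ(1/t) ≤ C_σ e^{λtσ} for λ∈(0,M], t>0. Define E(t) = ∫₀^{M} e^{-λt} dω(λ). Then the following are equivalent: (i) there is C₃>0 with E(t) ≤ C₃ φ(1/t) for all t>0; (ii) there is C₄>0 with ω(λ) ≤ C₄ φ(λ) for all λ ∈ (0, M]. -/

import Mathlib

open Set MeasureTheory

/-- Converse result (deterministic part): with `E(t) = ∫₀^M e^{-λt} dω(λ)`,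
`E(t) = O(φ(1/t))` iff `ω(λ) = O(φ(λ))` on `(0,M]`. -/
theorem stmt_9 (ω : StieltjesFunction ℝ) (φ : ℝ → ℝ) (R M σ Cσ : ℝ)
    (hR : 0 < R) (hM : 0 < M) (hσ : σ ∈ Ioo (0 : ℝ) 1) (hCσ : 0 < Cσ)
    (hω0 : ω 0 = 0) (hωM : ω M = R ^ 2)
    (hωnonneg : ∀ x, 0 ≤ x → 0 ≤ ω x)
    (hφmono : MonotoneOn φ (Ioi 0)) (hφpos : ∀ x, 0 < x → 0 < φ x)
    (hφS : ∀ lam ∈ Ioc (0 : ℝ) M, ∀ t : ℝ, 0 < t →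
      φ lam / φ (1 / t) ≤ Cσ * Real.exp (lam * t * σ)) :
    (∃ C₃ : ℝ, 0 < C₃ ∧ ∀ t : ℝ, 0 < t →
        (∫ lam in Ioc (0 : ℝ) M, Real.exp (-(lam * t)) ∂ω.measure) ≤ C₃ * φ (1 / t)) ↔
    (∃ C₄ : ℝ, 0 < C₄ ∧ ∀ lam ∈ Ioc (0 : ℝ) M, ω lam ≤ C₄ * φ lam) := by
  have hσ0 : 0 < σ := hσ.1
  have hσ1 : σ < 1 := hσ.2
  -- integrability of the exponential against the Stieltjes measure on (0,M]
  have hint : ∀ t : ℝ, IntegrableOn (fun lam => Real.exp (-(lam * t)))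
      (Ioc (0 : ℝ) M) ω.measure := by
    intro t
    have : IntegrableOn (fun lam => Real.exp (-(lam * t))) (Icc (0 : ℝ) M) ω.measure :=
      (Continuous.integrableOn_Icc (by continuity))
    exact this.mono_set Ioc_subset_Icc_self
  constructor
  · -- (i) → (ii)
    rintro ⟨C₃, hC₃, hE⟩
    refine ⟨Real.exp 1 * C₃, by positivity, ?_⟩
    rintro lam ⟨hlam0, hlamM⟩
    have ht : (0:ℝ) < 1 / lam := by positivity
    have key := hE (1 / lam) ht
    rw [one_div_one_div] at key
    -- lower bound for E(1/lam)
    have h1 : Real.exp (-1) * ω lam ≤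
        ∫ mu in Ioc (0 : ℝ) M, Real.exp (-(mu * (1 / lam))) ∂ω.measure := by
      have hsub : Ioc (0 : ℝ) lam ⊆ Ioc 0 M := Ioc_subset_Ioc le_rfl hlamM
      have h2 : ∫ mu in Ioc (0 : ℝ) lam, Real.exp (-(mu * (1 / lam))) ∂ω.measure ≤
          ∫ mu in Ioc (0 : ℝ) M, Real.exp (-(mu * (1 / lam))) ∂ω.measure := by
        apply setIntegral_mono_set (hint (1/lam))
        · exact Filter.Eventually.of_forall fun x => (Real.exp_pos _).le
        · exact HasSubset.Subset.eventuallyLE hsub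
      refine le_trans ?_ h2
      have h3 : ∫ mu in Ioc (0 : ℝ) lam, Real.exp (-1) ∂ω.measure ≤
          ∫ mu in Ioc (0 : ℝ) lam, Real.exp (-(mu * (1 / lam))) ∂ω.measure := by
        apply setIntegral_mono_on (integrableOn_const ?_)
          (((hint (1/lam)).mono_set hsub)) measurableSet_Ioc
        · rintro mu ⟨hmu0, hmul⟩
          apply Real.exp_le_exp.2
          rw [neg_le_neg_iff, mul_one_div, div_le_one hlam0]
          exact hmul
        · rw [ω.measure_Ioc]
          exact ENNReal.ofReal_ne_top
      refine le_trans ?_ h3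
      rw [setIntegral_const, measureReal_def, ω.measure_Ioc, hω0, sub_zero, smul_eq_mul,
        ENNReal.toReal_ofReal (hωnonneg lam hlam0.le), mul_comm]
    -- combine
    have := h1.trans key
    have hexp : (0:ℝ) < Real.exp (-1) := Real.exp_pos _
    calc ω lam = Real.exp 1 * (Real.exp (-1) * ω lam) := by
          rw [← mul_assoc, ← Real.exp_add]; simp
      _ ≤ Real.exp 1 * (C₃ * φ lam) := by
          apply mul_le_mul_of_nonneg_left this (Real.exp_pos _).le
      _ = Real.exp 1 * C₃ * φ lam := by ring
  · -- (ii) → (i)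
    rintro ⟨C₄, hC₄, hωφ⟩
    refine ⟨C₄ * Cσ / (1 - σ), div_pos (by positivity) (by linarith), ?_⟩
    intro t ht
    have hφt : 0 < φ (1 / t) := hφpos _ (by positivity)
    set μ := ω.measure.restrict (Ioc (0 : ℝ) M) with hμ
    set f : ℝ → ℝ := fun lam => Real.exp (-(lam * t)) with hf
    have hfint : Integrable f μ := hint t
    have hlayer := hfint.integral_eq_integral_meas_lt
      (Filter.Eventually.of_forall fun x => (Real.exp_pos _).le)
    rw [hlayer]
    set Cφ : ℝ := C₄ * Cσ * φ (1 / t) with hCφ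
    set h : ℝ → ℝ := Ioo (0:ℝ) 1 |>.indicator (fun s => Cφ * s ^ (-σ)) with hh
    -- pointwise bound
    have hbound : ∀ s ∈ Ioi (0:ℝ), (μ {a : ℝ | s < f a}).toReal ≤ h s := by
      intro s hs
      rw [mem_Ioi] at hs
      have hmbleset : MeasurableSet {a : ℝ | s < f a} :=
        measurableSet_lt measurable_const (by fun_prop)
      rw [hμ, Measure.restrict_apply hmbleset]
      by_cases hs1 : 1 ≤ s
      · have : {a : ℝ | s < f a} ∩ Ioc 0 M = ∅ := by
          ext a
          simp only [mem_inter_iff, mem_setOf_eq, mem_Ioc, mem_empty_iff_false, iff_false]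
          rintro ⟨hfa, ha0, haM⟩
          have : f a < 1 := by
            rw [hf]
            have : -(a * t) < 0 := by nlinarith
            simpa using Real.exp_lt_one_iff.2 this
          linarith
        rw [this]
        simp [hh, indicator_apply, mem_Ioo, not_lt.2 hs1]
      · push_neg at hs1
        have hhs : h s = Cφ * s ^ (-σ) := by
          rw [hh, indicator_of_mem (by exact ⟨hs, hs1⟩)]
        rw [hhs]
        have hlogs : Real.log s < 0 := Real.log_neg hs hs1
        set u : ℝ := -Real.log s / t with hu
        have hu0 : 0 < u := div_pos (by linarith) ht
        set v : ℝ := min u M with hv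
        have hv0 : 0 < v := lt_min hu0 hM
        have hvM : v ≤ M := min_le_right _ _
        have hsubset : {a : ℝ | s < f a} ∩ Ioc 0 M ⊆ Ioc 0 v := by
          rintro a ⟨hfa, ha0, haM⟩
          rw [mem_setOf_eq, hf] at hfa
          have : a < u := by
            rw [hu]
            have := (Real.log_lt_iff_lt_exp hs).mpr hfa
            rw [lt_div_iff₀ ht]
            linarith
          exact ⟨ha0, le_min this.le haM⟩
        have hmeas : (ω.measure ({a : ℝ | s < f a} ∩ Ioc 0 M)).toReal ≤ ω v := by
          have := measure_mono hsubset (μ := ω.measure)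
          rw [ω.measure_Ioc, hω0, sub_zero] at this
          calc (ω.measure ({a : ℝ | s < f a} ∩ Ioc 0 M)).toReal
              ≤ (ENNReal.ofReal (ω v)).toReal :=
                ENNReal.toReal_mono ENNReal.ofReal_ne_top this
            _ ≤ ω v := by rw [ENNReal.toReal_ofReal (hωnonneg v hv0.le)]
        refine hmeas.trans ?_
        -- ω v ≤ C₄ φ v ≤ C₄ Cσ φ(1/t) e^{v t σ} ≤ Cφ s^{-σ}
        have h1 : ω v ≤ C₄ * φ v := hωφ v ⟨hv0, hvM⟩
        have h2 : φ v ≤ Cσ * Real.exp (v * t * σ) * φ (1 / t) := by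
          have := hφS v ⟨hv0, hvM⟩ t ht
          rw [div_le_iff₀ hφt] at this
          linarith
        have h3 : Real.exp (v * t * σ) ≤ s ^ (-σ) := by
          have hvu : v * t * σ ≤ u * t * σ :=
            mul_le_mul_of_nonneg_right
              (mul_le_mul_of_nonneg_right (min_le_left _ _) ht.le) hσ0.le
          have hut : u * t = -Real.log s := by
            rw [hu]; field_simp
          calc Real.exp (v * t * σ) ≤ Real.exp (u * t * σ) := Real.exp_le_exp.2 hvu
            _ = s ^ (-σ) := by
                rw [hut, Real.rpow_def_of_pos hs]; ring_nf
        calc ω v ≤ C₄ * (Cσ * Real.exp (v * t * σ) * φ (1 / t)) :=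
              h1.trans (mul_le_mul_of_nonneg_left h2 hC₄.le)
          _ ≤ C₄ * (Cσ * (s ^ (-σ)) * φ (1 / t)) := by
              apply mul_le_mul_of_nonneg_left _ hC₄.le
              apply mul_le_mul_of_nonneg_right _ hφt.le
              exact mul_le_mul_of_nonneg_left h3 hCσ.le
          _ = Cφ * s ^ (-σ) := by rw [hCφ]; ring
    -- integrability of h on Ioi 0
    have hrpow_int : IntegrableOn (fun s : ℝ => Cφ * s ^ (-σ)) (Ioo (0:ℝ) 1) := by
      have : IntervalIntegrable (fun s : ℝ => s ^ (-σ)) volume 0 1 :=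
        intervalIntegral.intervalIntegrable_rpow' (by linarith)
      rw [intervalIntegrable_iff_integrableOn_Ioo_of_le (by norm_num)] at this
      exact this.const_mul Cφ
    have hh_int : IntegrableOn h (Ioi (0:ℝ)) := by
      have : Integrable h :=
        (integrable_indicator_iff measurableSet_Ioo).2 hrpow_int
      exact this.integrableOn
    -- measurability of the layer function
    have hg_meas : Measurable fun s : ℝ => (μ {a : ℝ | s < f a}).toReal := by
      refine Measurable.ennreal_toReal ?_
      exact Antitone.measurable (fun _ _ hst => measure_mono (fun _ hx => lt_of_le_of_lt hst hx))
    have hg_int : IntegrableOn (fun s : ℝ => (μ {a : ℝ | s < f a}).toReal) (Ioi (0:ℝ)) := by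
      apply Integrable.mono' hh_int hg_meas.aestronglyMeasurable.restrict
      filter_upwards [ae_restrict_mem measurableSet_Ioi] with s hs
      rw [Real.norm_of_nonneg ENNReal.toReal_nonneg]
      exact hbound s hs
    have hcomp : ∫ s in Ioi (0:ℝ), (μ {a : ℝ | s < f a}).toReal ≤ ∫ s in Ioi (0:ℝ), h s :=
      setIntegral_mono_on hg_int hh_int measurableSet_Ioi hbound
    refine hcomp.trans ?_
    -- compute the integral of h
    have : ∫ s in Ioi (0:ℝ), h s = ∫ s in Ioo (0:ℝ) 1, Cφ * s ^ (-σ) := by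
      rw [hh, setIntegral_indicator measurableSet_Ioo,
        show Ioi (0:ℝ) ∩ Ioo 0 1 = Ioo 0 1 from
          inter_eq_self_of_subset_right Ioo_subset_Ioi_self]
    rw [this]
    have hcalc : ∫ s in Ioo (0:ℝ) 1, Cφ * s ^ (-σ) = Cφ * (1 / (1 - σ)) := by
      rw [integral_const_mul]
      congr 1
      rw [← MeasureTheory.integral_Ioc_eq_integral_Ioo,
        ← intervalIntegral.integral_of_le (by norm_num : (0:ℝ) ≤ 1),
        integral_rpow (Or.inl (by linarith)),
        Real.one_rpow, Real.zero_rpow (by linarith)]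
      field_simp
      ring
    rw [hcalc, hCφ]
    apply le_of_eq
    ring
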